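/- For every dimension d ≥ 1, every SLKKM coloring χ : [0,1]^d → C, and every ε > 0, there exists a point p ∈ [0,1]^d such that the open ℓ∞ ball of radius ε centered at p contains points of at least ⌈(1 + ε/(1+ε))^d⌉ different colors, i.e. the set {c ∈ C : χ⁻¹(c) ∩ B°_∞(ε, p) ≠ ∅} has cardinality at least ⌈(1 + ε/(1+ε))^d⌉. -/

import Mathlib

open MeasureTheory Set
open scoped ENNReal NNReal

/-- open `r`-neighborhood of a set -/
def nb {α : Type*} [PseudoMetricSpace α] (r : ℝ) (A : Set α) : Set α := {p | ∃ x ∈ A, dist x p < r}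

lemma isOpen_nb {α : Type*} [PseudoMetricSpace α] (r : ℝ) (A : Set α) : IsOpen (nb r A) := by
  have : nb r A = ⋃ x ∈ A, Metric.ball x r := by
    ext p; simp [nb, Metric.mem_ball, dist_comm]
  rw [this]; exact isOpen_biUnion fun x _ => Metric.isOpen_ball

lemma preimage_affine_vol (ε : ℝ) (hε : 0 < ε) (B : Set ℝ) (c : ℝ) :
    volume ((fun t => (1+ε)⁻¹ * (c + t)) ⁻¹' B) = ENNReal.ofReal (1+ε) * volume B := by
  have h1ε : (0:ℝ) < 1 + ε := by linarith
  have hne : ((1+ε):ℝ)⁻¹ ≠ 0 := by positivity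
  have : (fun t => (1+ε)⁻¹ * (c + t)) ⁻¹' B = (fun t => c + t) ⁻¹' ((fun s => (1+ε)⁻¹ * s) ⁻¹' B) := by
    rfl
  rw [this, measure_preimage_add, Real.volume_preimage_mul_left hne, inv_inv,
    abs_of_pos h1ε]

lemma oneDim0 (ε : ℝ) (hε : 0 < ε) (S X : Set ℝ) (hX : X ⊆ Icc 0 1)
    (hXS : ∀ t ∈ X, ∃ s ∈ S, |t - s| < ε^2/(1+ε)) (hS : S ⊆ Icc (0:ℝ) 1) (h0 : (0:ℝ) ∈ S) :
    volume X + ENNReal.ofReal ε ≤ ENNReal.ofReal (1+ε) * volume (nb ε S ∩ Icc 0 1) := by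
  have h1ε : (0:ℝ) < 1 + ε := by linarith
  set φ : ℝ → ℝ := fun t => (1+ε)⁻¹ * (ε + t) with hφ
  have hsum : ε^2/(1+ε) + ε/(1+ε) = ε := by field_simp; ring
  have hq : 0 < ε/(1+ε) := by positivity
  have hε1 : ε/(1+ε) < 1 := by rw [div_lt_one h1ε]; linarith
  have key : X ∪ Ioo (-ε) 0 ⊆ φ ⁻¹' (nb ε S ∩ Icc 0 1) := by
    rintro t (htX | htE)
    · obtain ⟨ht0, ht1⟩ := hX htX
      obtain ⟨s, hsS, hts⟩ := hXS t htX
      rw [abs_lt] at hts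
      have hd : φ t - t = (ε - ε*t)/(1+ε) := by
        rw [hφ]; simp only; rw [eq_div_iff h1ε.ne', sub_mul, inv_mul_eq_div, div_mul_cancel₀ _ h1ε.ne']; ring
      have hd0 : 0 ≤ φ t - t := by
        rw [hd]; apply div_nonneg _ (le_of_lt h1ε); nlinarith
      have hd1 : φ t - t ≤ ε/(1+ε) := by
        rw [hd]; gcongr; nlinarith
      constructor
      · refine ⟨s, hsS, ?_⟩
        rw [Real.dist_eq, abs_lt]
        constructor <;> linarith [hts.1, hts.2]
      · constructor
        · positivity
        · rw [hφ]; simp only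
          rw [inv_mul_le_iff₀ h1ε]; linarith
    · obtain ⟨htl, htr⟩ := htE
      have h1 : 0 < ε + t := by linarith
      have hφt : 0 < φ t := by positivity
      have hφt2 : φ t < ε/(1+ε) := by
        rw [hφ]; simp only
        rw [inv_mul_eq_div, div_lt_div_iff₀ h1ε h1ε]
        nlinarith
      have hεε : ε/(1+ε) < ε := by
        rw [div_lt_iff₀ h1ε]; nlinarith
      constructor
      · exact ⟨0, h0, by rw [Real.dist_eq, abs_lt]; constructor <;> nlinarith⟩
      · exact ⟨le_of_lt hφt, by nlinarith⟩
  have hdisj : Disjoint X (Ioo (-ε) 0) := by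
    rw [Set.disjoint_left]
    intro t htX htE
    exact absurd (hX htX).1 (not_le.mpr htE.2)
  calc volume X + ENNReal.ofReal ε
      = volume X + volume (Ioo (-ε) 0) := by rw [Real.volume_Ioo]; norm_num
    _ = volume (X ∪ Ioo (-ε) 0) := (measure_union hdisj measurableSet_Ioo).symm
    _ ≤ volume (φ ⁻¹' (nb ε S ∩ Icc 0 1)) := measure_mono key
    _ = ENNReal.ofReal (1+ε) * volume (nb ε S ∩ Icc 0 1) := preimage_affine_vol ε hε _ ε

lemma oneDim1 (ε : ℝ) (hε : 0 < ε) (S X : Set ℝ) (hX : X ⊆ Icc 0 1)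
    (hXS : ∀ t ∈ X, ∃ s ∈ S, |t - s| < ε^2/(1+ε)) (hS : S ⊆ Icc (0:ℝ) 1) (h1 : (1:ℝ) ∈ S) :
    volume X + ENNReal.ofReal ε ≤ ENNReal.ofReal (1+ε) * volume (nb ε S ∩ Icc 0 1) := by
  have h1ε : (0:ℝ) < 1 + ε := by linarith
  set φ : ℝ → ℝ := fun t => (1+ε)⁻¹ * (0 + t) with hφ
  have hsum : ε^2/(1+ε) + ε/(1+ε) = ε := by field_simp; ring
  have hq : 0 < ε/(1+ε) := by positivity
  have hε1 : ε/(1+ε) < 1 := by rw [div_lt_one h1ε]; linarith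
  have key : X ∪ Ioo 1 (1+ε) ⊆ φ ⁻¹' (nb ε S ∩ Icc 0 1) := by
    rintro t (htX | htE)
    · obtain ⟨ht0, ht1⟩ := hX htX
      obtain ⟨s, hsS, hts⟩ := hXS t htX
      rw [abs_lt] at hts
      have hd : t - φ t = (ε * t)/(1+ε) := by
        rw [hφ]; simp only; rw [eq_div_iff h1ε.ne', sub_mul, inv_mul_eq_div, div_mul_cancel₀ _ h1ε.ne']; ring
      have hd0 : 0 ≤ t - φ t := by
        rw [hd]; positivity
      have hd1 : t - φ t ≤ ε/(1+ε) := by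
        rw [hd]; gcongr; nlinarith
      constructor
      · refine ⟨s, hsS, ?_⟩
        rw [Real.dist_eq, abs_lt]
        constructor <;> linarith [hts.1, hts.2]
      · constructor
        · rw [hφ]; simp only; positivity
        · rw [hφ]; simp only
          rw [inv_mul_le_iff₀ h1ε]; linarith
    · obtain ⟨htl, htr⟩ := htE
      have hd : 1 - φ t = (1 + ε - t)/(1+ε) := by
        rw [hφ]; simp only; rw [eq_div_iff h1ε.ne', sub_mul, inv_mul_eq_div, div_mul_cancel₀ _ h1ε.ne']; ring
      have hd0 : 0 < 1 - φ t := by rw [hd]; apply div_pos; linarith; exact h1ε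
      have hεε : ε/(1+ε) < ε := by
        rw [div_lt_iff₀ h1ε]; nlinarith
      have hd1 : 1 - φ t < ε/(1+ε) := by
        rw [hd, div_lt_div_iff₀ h1ε h1ε]; nlinarith
      constructor
      · exact ⟨1, h1, by rw [Real.dist_eq, abs_lt]; constructor <;> nlinarith⟩
      · constructor
        · rw [hφ]; simp only; positivity
        · linarith
  have hdisj : Disjoint X (Ioo 1 (1+ε)) := by
    rw [Set.disjoint_left]
    intro t htX htE
    exact absurd (hX htX).2 (not_le.mpr htE.1)
  calc volume X + ENNReal.ofReal ε
      = volume X + volume (Ioo 1 (1+ε)) := by rw [Real.volume_Ioo]; norm_num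
    _ = volume (X ∪ Ioo 1 (1+ε)) := (measure_union hdisj measurableSet_Ioo).symm
    _ ≤ volume (φ ⁻¹' (nb ε S ∩ Icc 0 1)) := measure_mono key
    _ = ENNReal.ofReal (1+ε) * volume (nb ε S ∩ Icc 0 1) := preimage_affine_vol ε hε _ 0

example (n : ℕ) (t:ℝ) (y : Fin n → ℝ) :
    (MeasurableEquiv.piFinSuccAbove (fun _ : Fin (n+1) => ℝ) 0).symm (t,y) = Fin.cons t y := by
  simp [MeasurableEquiv.piFinSuccAbove, Fin.consEquiv]

-- helpers
lemma cube_dist_one {m : ℕ} {x y : Fin m → ℝ} (hx : x ∈ Icc (0:Fin m → ℝ) 1)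
    (hy : y ∈ Icc (0:Fin m → ℝ) 1) (i : Fin m) (hxi : x i = 0) (hyi : y i = 1) :
    dist x y = 1 := by
  apply le_antisymm
  · refine (dist_pi_le_iff zero_le_one).mpr fun j => ?_
    rw [Real.dist_eq, abs_le]
    have h1 := hx.1 j; have h2 := hx.2 j; have h3 := hy.1 j; have h4 := hy.2 j
    simp only [Pi.zero_apply, Pi.one_apply] at h1 h2 h3 h4
    constructor <;> linarith
  · calc (1:ℝ) = dist (x i) (y i) := by rw [hxi, hyi, Real.dist_eq]; norm_num
      _ ≤ dist x y := dist_le_pi_dist x y i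

lemma dist_cons_cons_eq {n : ℕ} (t : ℝ) (y z : Fin n → ℝ) (h : dist y z = 1) :
    dist (Fin.cons t y : Fin (n+1) → ℝ) (Fin.cons t z) = 1 := by
  apply le_antisymm
  · refine (dist_pi_le_iff zero_le_one).mpr fun j => ?_
    refine Fin.cases ?_ (fun i => ?_) j
    · simp
    · simp only [Fin.cons_succ]
      calc dist (y i) (z i) ≤ dist y z := dist_le_pi_dist y z i
        _ = 1 := h
  · have hcoord : ∀ i : Fin n, dist (y i) (z i) ≤ dist (Fin.cons t y : Fin (n+1) → ℝ) (Fin.cons t z) := by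
      intro i
      have h2 := dist_le_pi_dist (Fin.cons t y : Fin (n+1) → ℝ) (Fin.cons t z) i.succ
      simpa using h2
    have h3 : dist y z ≤ dist (Fin.cons t y : Fin (n+1) → ℝ) (Fin.cons t z) :=
      (dist_pi_le_iff dist_nonneg).mpr hcoord
    linarith [h3, h.symm.le]

lemma dist_cons_lt {n : ℕ} {ε : ℝ} (hε : 0 < ε) (x : Fin (n+1) → ℝ) (t : ℝ) (y : Fin n → ℝ) :
    dist x (Fin.cons t y) < ε ↔ |x 0 - t| < ε ∧ ∀ j : Fin n, |x j.succ - y j| < ε := by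
  rw [dist_pi_lt_iff hε, Fin.forall_fin_succ]
  simp [Real.dist_eq]

lemma mem_Icc_cons {n : ℕ} {t : ℝ} {y : Fin n → ℝ} :
    Fin.cons t y ∈ Icc (0:Fin (n+1) → ℝ) 1 ↔ t ∈ Icc (0:ℝ) 1 ∧ y ∈ Icc (0:Fin n → ℝ) 1 := by
  simp only [Set.mem_Icc, Pi.le_def, Fin.forall_fin_succ]
  simp only [Fin.cons_zero, Fin.cons_succ, Pi.zero_apply, Pi.one_apply]
  tauto

lemma key (ε : ℝ) (hε : 0 < ε) :
    ∀ (n : ℕ) (A : ℕ → Set (Fin n → ℝ)),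
      (∀ i, A i ⊆ Icc 0 1) → (Icc 0 1 ⊆ ⋃ i, A i) →
      (∀ i, ∀ x ∈ A i, ∀ y ∈ A i, dist x y ≠ 1) →
      ENNReal.ofReal (((1+2*ε)/(1+ε))^n) ≤ ∑' i, volume (nb ε (A i) ∩ Icc 0 1) := by
  have h1ε : (0:ℝ) < 1 + ε := by linarith
  intro n
  induction n with
  | zero =>
    intro A hsub hcov hvalid
    have h0 : (0 : Fin 0 → ℝ) ∈ Icc (0:Fin 0 → ℝ) 1 := ⟨le_refl _, fun i => i.elim0⟩
    obtain ⟨i, hi⟩ := mem_iUnion.mp (hcov h0)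
    have hIcc : Icc (0:Fin 0 → ℝ) 1 ⊆ nb ε (A i) ∩ Icc 0 1 := by
      intro p hp
      exact ⟨⟨0, hi, by rw [Subsingleton.elim (0 : Fin 0 → ℝ) p, dist_self]; exact hε⟩, hp⟩
    calc ENNReal.ofReal (((1+2*ε)/(1+ε))^0) = 1 := by norm_num
      _ = volume (Icc (0:Fin 0 → ℝ) 1) := by simp [Real.volume_Icc_pi]
      _ ≤ volume (nb ε (A i) ∩ Icc 0 1) := measure_mono hIcc
      _ ≤ ∑' i, volume (nb ε (A i) ∩ Icc 0 1) := ENNReal.le_tsum i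
  | succ n ih =>
    intro A hsub hcov hvalid
    set c : ℝ := (1+2*ε)/(1+ε) with hc
    have hc0 : (0:ℝ) < c := by positivity
    set δ : ℝ := ε^2/(1+ε) with hδdef
    have hδ0 : 0 < δ := by positivity
    have hδε : δ < ε := by rw [hδdef, div_lt_iff₀ h1ε]; nlinarith
    -- slice classes
    set As : ℝ → ℕ → Set (Fin n → ℝ) := fun t i => {y | Fin.cons t y ∈ A i} with hAs
    -- slice bound from induction hypothesis
    have h_slice : ∀ t ∈ Icc (0:ℝ) 1,
        ENNReal.ofReal (c^n) ≤ ∑' i, volume (nb ε (As t i) ∩ Icc 0 1) := by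
      intro t ht
      refine ih (As t) (fun i y hy => ?_) (fun y hy => ?_) (fun i y hy z hz hd => ?_)
      · exact (mem_Icc_cons.mp (hsub i hy)).2
      · obtain ⟨j, hj⟩ := mem_iUnion.mp (hcov (mem_Icc_cons.mpr ⟨ht, hy⟩))
        exact mem_iUnion.mpr ⟨j, hj⟩
      · exact hvalid i _ hy _ hz (dist_cons_cons_eq t y z hd)
    -- the sets
    set S : ℕ → (Fin n → ℝ) → Set ℝ :=
      fun i y => {a | ∃ x ∈ A i, x 0 = a ∧ ∀ j : Fin n, |x j.succ - y j| < ε} with hS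
    set V : ℕ → Set (Fin (n+1) → ℝ) :=
      fun i => {p | ∃ x ∈ A i, |x 0 - p 0| < δ ∧ ∀ j : Fin n, |x j.succ - p j.succ| < ε} with hV
    set X : ℕ → (Fin n → ℝ) → Set ℝ :=
      fun i y => {t | Fin.cons t y ∈ V i ∩ Icc 0 1} with hX
    have hVopen : ∀ i, IsOpen (V i) := by
      intro i
      have : V i = ⋃ x ∈ A i,
          ({p : Fin (n+1) → ℝ | |x 0 - p 0| < δ} ∩ ⋂ j : Fin n, {p | |x j.succ - p j.succ| < ε}) := by
        ext p
        simp only [hV, mem_setOf_eq, mem_iUnion, mem_inter_iff, mem_iInter, exists_prop]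
      rw [this]
      refine isOpen_biUnion fun x _ => IsOpen.inter ?_ (isOpen_iInter_of_finite fun j => ?_)
      · exact isOpen_lt (continuous_const.sub (continuous_apply 0)).abs continuous_const
      · exact isOpen_lt (continuous_const.sub (continuous_apply j.succ)).abs continuous_const
    have hSsub : ∀ i y, S i y ⊆ Icc (0:ℝ) 1 := by
      rintro i y a ⟨x, hx, rfl, -⟩
      have h := hsub i hx
      exact ⟨by simpa using h.1 0, by simpa using h.2 0⟩
    have hXsub : ∀ i y, X i y ⊆ Icc (0:ℝ) 1 := by
      intro i y t ht
      exact (mem_Icc_cons.mp ht.2).1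
    have hXS : ∀ i y, ∀ t ∈ X i y, ∃ s ∈ S i y, |t - s| < δ := by
      rintro i y t ⟨⟨x, hx, hx0, hxj⟩, -⟩
      refine ⟨x 0, ⟨x, hx, rfl, fun j => by simpa using hxj j⟩, ?_⟩
      rw [abs_sub_comm]
      simpa using hx0
    have hG0 : ∀ i y, y ∈ nb ε (As 0 i) → (0:ℝ) ∈ S i y := by
      rintro i y ⟨z, hz, hdz⟩
      refine ⟨Fin.cons 0 z, hz, by simp, fun j => ?_⟩
      have := (dist_pi_lt_iff hε).mp hdz j
      rw [Real.dist_eq] at this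
      simpa using this
    have hG1 : ∀ i y, y ∈ nb ε (As 1 i) → (1:ℝ) ∈ S i y := by
      rintro i y ⟨z, hz, hdz⟩
      refine ⟨Fin.cons 1 z, hz, by simp, fun j => ?_⟩
      have := (dist_pi_lt_iff hε).mp hdz j
      rw [Real.dist_eq] at this
      simpa using this
    have hG01 : ∀ i y, y ∈ nb ε (As 0 i) → y ∈ nb ε (As 1 i) → False := by
      intro i y h0 h1
      obtain ⟨x, hx, hx0, -⟩ := hG0 i y h0
      obtain ⟨x', hx', hx'0, -⟩ := hG1 i y h1
      exact hvalid i x hx x' hx' (cube_dist_one (hsub i hx) (hsub i hx') 0 hx0 hx'0)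
    -- fiber of U
    have hfibU : ∀ i, ∀ y ∈ Icc (0:Fin n → ℝ) 1,
        {t : ℝ | Fin.cons t y ∈ nb ε (A i) ∩ Icc 0 1} = nb ε (S i y) ∩ Icc 0 1 := by
      intro i y hy
      ext t
      constructor
      · rintro ⟨⟨x, hxA, hxd⟩, hmem⟩
        obtain ⟨hd0, hdj⟩ := (dist_cons_lt hε x t y).mp hxd
        exact ⟨⟨x 0, ⟨x, hxA, rfl, hdj⟩, by rwa [Real.dist_eq]⟩, (mem_Icc_cons.mp hmem).1⟩
      · rintro ⟨⟨a, ⟨x, hxA, rfl, hj⟩, hat⟩, htQ⟩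
        refine ⟨⟨x, hxA, (dist_cons_lt hε x t y).mpr ⟨by rwa [Real.dist_eq] at hat, hj⟩⟩,
          mem_Icc_cons.mpr ⟨htQ, hy⟩⟩
    -- the per-fiber inequality
    have perfiber : ∀ i (y : Fin n → ℝ),
        volume (X i y)
          + (nb ε (As 0 i) ∩ Icc 0 1).indicator (fun _ => ENNReal.ofReal ε) y
          + (nb ε (As 1 i) ∩ Icc 0 1).indicator (fun _ => ENNReal.ofReal ε) y
          ≤ ENNReal.ofReal (1+ε) * volume {t : ℝ | Fin.cons t y ∈ nb ε (A i) ∩ Icc 0 1} := by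
      intro i y
      by_cases hy : y ∈ Icc (0:Fin n → ℝ) 1
      · rw [hfibU i y hy]
        by_cases h0 : y ∈ nb ε (As 0 i)
        · have h1 : y ∉ nb ε (As 1 i) := fun h1 => hG01 i y h0 h1
          rw [Set.indicator_of_mem (mem_inter h0 hy), Set.indicator_of_notMem (fun hm : y ∈ nb ε (As 1 i) ∩ Icc 0 1 => h1 hm.1),
            add_zero]
          exact oneDim0 ε hε (S i y) (X i y) (hXsub i y) (hXS i y) (hSsub i y) (hG0 i y h0)
        · by_cases h1 : y ∈ nb ε (As 1 i)
          · rw [Set.indicator_of_notMem (fun hm : y ∈ nb ε (As 0 i) ∩ Icc 0 1 => h0 hm.1), Set.indicator_of_mem (mem_inter h1 hy),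
              add_zero]
            exact oneDim1 ε hε (S i y) (X i y) (hXsub i y) (hXS i y) (hSsub i y) (hG1 i y h1)
          · rw [Set.indicator_of_notMem (fun hm : y ∈ nb ε (As 0 i) ∩ Icc 0 1 => h0 hm.1),
              Set.indicator_of_notMem (fun hm : y ∈ nb ε (As 1 i) ∩ Icc 0 1 => h1 hm.1), add_zero, add_zero]
            have hsubX : X i y ⊆ nb ε (S i y) ∩ Icc 0 1 := by
              intro t ht
              obtain ⟨s, hs, hts⟩ := hXS i y t ht
              exact ⟨⟨s, hs, by rw [Real.dist_eq, abs_sub_comm]; linarith⟩, hXsub i y ht⟩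
            calc volume (X i y) ≤ volume (nb ε (S i y) ∩ Icc 0 1) := measure_mono hsubX
              _ ≤ ENNReal.ofReal (1+ε) * volume (nb ε (S i y) ∩ Icc 0 1) :=
                  le_mul_of_one_le_left zero_le (ENNReal.one_le_ofReal.mpr (by linarith))
      · have hX0 : X i y = ∅ := by
          ext t
          simp only [hX, mem_inter_iff, mem_setOf_eq, mem_empty_iff_false, iff_false]
          rintro ⟨-, hm⟩
          exact hy (mem_Icc_cons.mp hm).2
        rw [hX0, Set.indicator_of_notMem (fun hm : y ∈ nb ε (As 0 i) ∩ Icc 0 1 => hy hm.2),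
          Set.indicator_of_notMem (fun hm : y ∈ nb ε (As 1 i) ∩ Icc 0 1 => hy hm.2)]
        simp
    -- the measurable equivalence
    set e := MeasurableEquiv.piFinSuccAbove (fun _ : Fin (n+1) => ℝ) 0 with he
    have hse : ∀ (t : ℝ) (y : Fin n → ℝ), e.symm (t, y) = Fin.cons t y := by
      intro t y
      simp [he, MeasurableEquiv.piFinSuccAbove, Fin.consEquiv]
    have hmp : MeasurePreserving e.symm volume volume :=
      (volume_preserving_piFinSuccAbove (fun _ : Fin (n+1) => ℝ) 0).symm e
    have hvolfib : ∀ s : Set (Fin (n+1) → ℝ), MeasurableSet s →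
        volume s = ∫⁻ y, volume {t : ℝ | Fin.cons t y ∈ s} ∂volume := by
      intro s hs
      have h1 : volume s = (volume.prod volume) (e.symm ⁻¹' s) := by
        rw [← hmp.measure_preimage hs.nullMeasurableSet, Measure.volume_eq_prod]
      rw [h1, Measure.prod_apply_symm (e.symm.measurable hs)]
      congr 1
      funext y
      congr 1
      ext t
      simp [hse]
    have hmeasfib : ∀ s : Set (Fin (n+1) → ℝ), MeasurableSet s →
        Measurable (fun y : Fin n → ℝ => volume {t : ℝ | Fin.cons t y ∈ s}) := by
      intro s hs
      have heq : (fun y : Fin n → ℝ => volume {t : ℝ | Fin.cons t y ∈ s})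
          = fun y => volume ((fun t => (t, y)) ⁻¹' (e.symm ⁻¹' s)) := by
        funext y
        congr 1
        ext t
        simp [hse]
      rw [heq]
      exact measurable_measure_prodMk_right (e.symm.measurable hs)
    have hUm : ∀ i, MeasurableSet (nb ε (A i) ∩ Icc (0:Fin (n+1) → ℝ) 1) :=
      fun i => (isOpen_nb _ _).measurableSet.inter measurableSet_Icc
    have hVm : ∀ i, MeasurableSet (V i ∩ Icc (0:Fin (n+1) → ℝ) 1) :=
      fun i => (hVopen i).measurableSet.inter measurableSet_Icc
    have hG0m : ∀ i, MeasurableSet (nb ε (As 0 i) ∩ Icc (0:Fin n → ℝ) 1) :=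
      fun i => (isOpen_nb _ _).measurableSet.inter measurableSet_Icc
    have hG1m : ∀ i, MeasurableSet (nb ε (As 1 i) ∩ Icc (0:Fin n → ℝ) 1) :=
      fun i => (isOpen_nb _ _).measurableSet.inter measurableSet_Icc
    have hXeq : ∀ i, (fun y : Fin n → ℝ => volume (X i y))
        = fun y => volume {t : ℝ | Fin.cons t y ∈ V i ∩ Icc 0 1} := by
      intro i
      funext y
      rw [hX]
    have hInt : ∀ i,
        volume (V i ∩ Icc 0 1) + ENNReal.ofReal ε * volume (nb ε (As 0 i) ∩ Icc 0 1)
          + ENNReal.ofReal ε * volume (nb ε (As 1 i) ∩ Icc 0 1)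
          ≤ ENNReal.ofReal (1+ε) * volume (nb ε (A i) ∩ Icc 0 1) := by
      intro i
      have hmV : Measurable (fun y => volume (X i y)) := by
        rw [hXeq i]
        exact hmeasfib _ (hVm i)
      have hm0 : Measurable ((nb ε (As 0 i) ∩ Icc 0 1).indicator
          (fun _ : Fin n → ℝ => ENNReal.ofReal ε)) := measurable_const.indicator (hG0m i)
      have e1 : volume (V i ∩ Icc 0 1) = ∫⁻ y, volume (X i y) ∂volume := by
        rw [hXeq i]
        exact hvolfib _ (hVm i)
      have e2 : ENNReal.ofReal ε * volume (nb ε (As 0 i) ∩ Icc 0 1)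
          = ∫⁻ y, (nb ε (As 0 i) ∩ Icc 0 1).indicator (fun _ => ENNReal.ofReal ε) y ∂volume :=
        (lintegral_indicator_const (hG0m i) _).symm
      have e3 : ENNReal.ofReal ε * volume (nb ε (As 1 i) ∩ Icc 0 1)
          = ∫⁻ y, (nb ε (As 1 i) ∩ Icc 0 1).indicator (fun _ => ENNReal.ofReal ε) y ∂volume :=
        (lintegral_indicator_const (hG1m i) _).symm
      rw [e1, e2, e3, ← lintegral_add_left hmV, ← lintegral_add_left (f := fun y => volume (X i y) + (nb ε (As 0 i) ∩ Icc 0 1).indicator (fun _ => ENNReal.ofReal ε) y) (hmV.add hm0)]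
      have e4 : ENNReal.ofReal (1+ε) * volume (nb ε (A i) ∩ Icc 0 1)
          = ∫⁻ y, ENNReal.ofReal (1+ε)
              * volume {t : ℝ | Fin.cons t y ∈ nb ε (A i) ∩ Icc 0 1} ∂volume := by
        rw [hvolfib _ (hUm i), lintegral_const_mul _ (hmeasfib _ (hUm i))]
      rw [e4]
      exact lintegral_mono fun y => perfiber i y
    have hsum1 : ∑' i, (volume (V i ∩ Icc 0 1)
        + ENNReal.ofReal ε * volume (nb ε (As 0 i) ∩ Icc 0 1)
        + ENNReal.ofReal ε * volume (nb ε (As 1 i) ∩ Icc 0 1))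
        ≤ ENNReal.ofReal (1+ε) * ∑' i, volume (nb ε (A i) ∩ Icc 0 1) := by
      rw [← ENNReal.tsum_mul_left]
      exact ENNReal.tsum_le_tsum hInt
    rw [ENNReal.tsum_add, ENNReal.tsum_add, ENNReal.tsum_mul_left, ENNReal.tsum_mul_left] at hsum1
    have hT : ENNReal.ofReal (c^n) ≤ ∑' i, volume (V i ∩ Icc 0 1) := by
      have hFmeas : Measurable (fun p : Fin (n+1) → ℝ =>
          ∑' i, (V i ∩ Icc 0 1).indicator (fun _ => (1:ℝ≥0∞)) p) :=
        Measurable.ennreal_tsum fun i => measurable_const.indicator (hVm i)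
      have h1 : ∑' i, volume (V i ∩ Icc 0 1)
          = ∫⁻ p, ∑' i, (V i ∩ Icc 0 1).indicator (fun _ => (1:ℝ≥0∞)) p ∂volume := by
        rw [lintegral_tsum (fun i => (measurable_const.indicator (hVm i)).aemeasurable)]
        congr 1
        funext i
        rw [lintegral_indicator_const (hVm i), one_mul]
      have h2 : ∫⁻ p, ∑' i, (V i ∩ Icc 0 1).indicator (fun _ => (1:ℝ≥0∞)) p ∂volume
          = ∫⁻ t : ℝ, ∫⁻ y : Fin n → ℝ,
              (∑' i, (V i ∩ Icc 0 1).indicator (fun _ => (1:ℝ≥0∞)) (Fin.cons t y)) ∂volume ∂volume := by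
        rw [← hmp.lintegral_comp hFmeas, Measure.volume_eq_prod,
          lintegral_prod (fun z : ℝ × (Fin n → ℝ) =>
            ∑' i, (V i ∩ Icc 0 1).indicator (fun _ => (1:ℝ≥0∞)) (e.symm z))
            (hFmeas.comp e.symm.measurable).aemeasurable]
        simp_rw [hse]
      have h3 : ∀ t ∈ Icc (0:ℝ) 1, ENNReal.ofReal (c^n)
          ≤ ∫⁻ y, (∑' i, (V i ∩ Icc 0 1).indicator (fun _ => (1:ℝ≥0∞)) (Fin.cons t y)) ∂volume := by
        intro t ht
        refine le_trans (h_slice t ht) ?_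
        have hGtm : ∀ i, MeasurableSet (nb ε (As t i) ∩ Icc (0:Fin n → ℝ) 1) :=
          fun i => (isOpen_nb _ _).measurableSet.inter measurableSet_Icc
        have hptw : ∀ (i : ℕ) (y : Fin n → ℝ),
            (nb ε (As t i) ∩ Icc 0 1).indicator (fun _ => (1:ℝ≥0∞)) y
              ≤ (V i ∩ Icc 0 1).indicator (fun _ => (1:ℝ≥0∞)) (Fin.cons t y) := by
          intro i y
          by_cases hy : y ∈ nb ε (As t i) ∩ Icc 0 1
          · rw [Set.indicator_of_mem hy, Set.indicator_of_mem]
            obtain ⟨⟨z, hz, hdz⟩, hyQ⟩ := hy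
            refine ⟨⟨Fin.cons t z, hz, ?_, fun j => ?_⟩, mem_Icc_cons.mpr ⟨ht, hyQ⟩⟩
            · simpa using hδ0
            · have hj := (dist_pi_lt_iff hε).mp hdz j
              rw [Real.dist_eq] at hj
              simpa using hj
          · rw [Set.indicator_of_notMem hy]
            exact zero_le
        have hstep : ∑' i, volume (nb ε (As t i) ∩ Icc 0 1)
            = ∫⁻ y, ∑' i, (nb ε (As t i) ∩ Icc 0 1).indicator (fun _ => (1:ℝ≥0∞)) y ∂volume := by
          rw [lintegral_tsum (fun i => (measurable_const.indicator (hGtm i)).aemeasurable)]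
          congr 1
          funext i
          rw [lintegral_indicator_const (hGtm i), one_mul]
        rw [hstep]
        exact lintegral_mono fun y => ENNReal.tsum_le_tsum fun i => hptw i y
      have hinner : Measurable (fun t : ℝ => ∫⁻ y : Fin n → ℝ,
          (∑' i, (V i ∩ Icc 0 1).indicator (fun _ => (1:ℝ≥0∞)) (Fin.cons t y)) ∂volume) := by
        have hv : Measurable (fun z : ℝ × (Fin n → ℝ) =>
            ∑' i, (V i ∩ Icc 0 1).indicator (fun _ => (1:ℝ≥0∞)) (Fin.cons z.1 z.2)) := by
          have h' : (fun z : ℝ × (Fin n → ℝ) =>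
              ∑' i, (V i ∩ Icc 0 1).indicator (fun _ => (1:ℝ≥0∞)) (Fin.cons z.1 z.2))
              = (fun p => ∑' i, (V i ∩ Icc 0 1).indicator (fun _ => (1:ℝ≥0∞)) p) ∘ ⇑e.symm := by
            funext z
            simp only [Function.comp_apply]
            rw [← hse z.1 z.2]
          rw [h']
          exact hFmeas.comp e.symm.measurable
        exact Measurable.lintegral_prod_right
          (f := fun t y => ∑' i, (V i ∩ Icc 0 1).indicator (fun _ => (1:ℝ≥0∞)) (Fin.cons t y)) hv
      calc ENNReal.ofReal (c^n)
          = ∫⁻ t in Icc (0:ℝ) 1, ENNReal.ofReal (c^n) ∂volume := by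
            rw [setLIntegral_const, Real.volume_Icc]
            norm_num
        _ ≤ ∫⁻ t in Icc (0:ℝ) 1, ∫⁻ y : Fin n → ℝ,
              (∑' i, (V i ∩ Icc 0 1).indicator (fun _ => (1:ℝ≥0∞)) (Fin.cons t y)) ∂volume ∂volume :=
            setLIntegral_mono hinner h3
        _ ≤ ∫⁻ t : ℝ, ∫⁻ y : Fin n → ℝ,
              (∑' i, (V i ∩ Icc 0 1).indicator (fun _ => (1:ℝ≥0∞)) (Fin.cons t y)) ∂volume ∂volume :=
            setLIntegral_le_lintegral _ _
        _ = ∑' i, volume (V i ∩ Icc 0 1) := by rw [← h2, ← h1]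
    have hβ0 := h_slice 0 (by norm_num)
    have hβ1 := h_slice 1 (by norm_num)
    have hcomb : ENNReal.ofReal ((1+2*ε) * c^n)
        ≤ ENNReal.ofReal (1+ε) * ∑' i, volume (nb ε (A i) ∩ Icc 0 1) := by
      have hsplit : ENNReal.ofReal ((1+2*ε) * c^n)
          = ENNReal.ofReal (c^n) + ENNReal.ofReal ε * ENNReal.ofReal (c^n)
            + ENNReal.ofReal ε * ENNReal.ofReal (c^n) := by
        rw [← ENNReal.ofReal_mul hε.le, ← ENNReal.ofReal_add (by positivity) (by positivity),
          ← ENNReal.ofReal_add (by positivity) (by positivity)]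
        ring_nf
      rw [hsplit]
      exact le_trans (add_le_add (add_le_add hT (mul_le_mul_right hβ0 _))
        (mul_le_mul_right hβ1 _)) hsum1
    have hgoal : ENNReal.ofReal (1+ε) * ENNReal.ofReal (c^(n+1))
        = ENNReal.ofReal ((1+2*ε) * c^n) := by
      rw [← ENNReal.ofReal_mul h1ε.le]
      congr 1
      rw [pow_succ, hc]
      field_simp
    refine (ENNReal.mul_le_mul_iff_right (a := ENNReal.ofReal (1+ε)) ?_ ENNReal.ofReal_ne_top).mp ?_
    · simp only [ne_eq, ENNReal.ofReal_eq_zero, not_le]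
      linarith
    · rw [hgoal]
      exact hcomb


/-- **Neighborhood KKM-Lebesgue Theorem.** Given an SLKKM coloring of `[0,1]^d`
(no two points of the cube at `ℓ∞` distance `1` get the same color), for any `ε > 0`
there is a point `p` of the cube whose open `ℓ∞` `ε`-ball contains points of at least
`⌈(1 + ε/(1+ε))^d⌉` different colors. -/
theorem neighborhood_kkm_lebesgue
    (d : ℕ) (hd : 1 ≤ d) (C : Type*) (χ : (Fin d → ℝ) → C)
    (hχ : ∀ x ∈ Set.Icc (0 : Fin d → ℝ) 1, ∀ y ∈ Set.Icc (0 : Fin d → ℝ) 1,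
      dist x y = 1 → χ x ≠ χ y)
    (ε : ℝ) (hε : 0 < ε) :
    ∃ p ∈ Set.Icc (0 : Fin d → ℝ) 1,
      (⌈(1 + ε / (1 + ε)) ^ d⌉₊ : ℕ∞) ≤
        {c : C | (Set.Icc (0 : Fin d → ℝ) 1 ∩ χ ⁻¹' {c} ∩ Metric.ball p ε).Nonempty}.encard := by
  classical
  by_contra hcon
  push_neg at hcon
  have h1ε : (0:ℝ) < 1 + ε := by linarith
  set y : ℝ := (1 + ε / (1 + ε)) ^ d with hy
  set K : ℕ := ⌈y⌉₊ with hK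
  have hy0 : (0:ℝ) < y := by positivity
  have hK1 : 1 ≤ K := Nat.one_le_ceil_iff.mpr hy0
  have hyeq : y = ((1+2*ε)/(1+ε))^d := by
    rw [hy]
    congr 1
    field_simp
    ring
  -- every ε-ball around a cube point sees at most K-1 colors
  have hfin : ∀ p ∈ Icc (0:Fin d → ℝ) 1,
      {c : C | (Icc (0:Fin d → ℝ) 1 ∩ χ ⁻¹' {c} ∩ Metric.ball p ε).Nonempty}.encard
        ≤ ((K - 1 : ℕ) : ℕ∞) := by
    intro p hp
    have hlt := hcon p hp
    have hne : {c : C | (Icc (0:Fin d → ℝ) 1 ∩ χ ⁻¹' {c} ∩ Metric.ball p ε).Nonempty}.encard ≠ ⊤ :=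
      ne_top_of_lt hlt
    have hfin' := Set.encard_ne_top_iff.mp hne
    rw [hfin'.encard_eq_coe_toFinset_card] at hlt ⊢
    rw [Nat.cast_lt] at hlt
    exact Nat.cast_le.mpr (Nat.le_sub_one_of_lt hlt)
  -- a countable dense net in the cube
  have hcov_net : ∃ D : Set (Fin d → ℝ), D.Countable ∧ D ⊆ Icc 0 1 ∧
      ∀ x ∈ Icc (0:Fin d → ℝ) 1, ∃ q ∈ D, dist x q < ε := by
    have hcomp : IsCompact (Icc (0:Fin d → ℝ) 1) := isCompact_Icc
    have hcover : Icc (0:Fin d → ℝ) 1 ⊆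
        ⋃ q : ↥(Icc (0:Fin d → ℝ) 1), Metric.ball (q : Fin d → ℝ) ε := by
      intro x hx
      exact mem_iUnion.mpr ⟨⟨x, hx⟩, Metric.mem_ball_self hε⟩
    obtain ⟨t, ht⟩ := hcomp.elim_finite_subcover _ (fun q => Metric.isOpen_ball) hcover
    refine ⟨(fun q : ↥(Icc (0:Fin d → ℝ) 1) => (q : Fin d → ℝ)) '' t,
      (t.countable_toSet.image _), ?_, ?_⟩
    · rintro q ⟨q', -, rfl⟩
      exact q'.2
    · intro x hx
      obtain ⟨q, hqt, hq⟩ := mem_iUnion₂.mp (ht hx)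
      exact ⟨q, ⟨q, hqt, rfl⟩, Metric.mem_ball.mp hq⟩
  obtain ⟨D, hDc, hDsub, hDnet⟩ := hcov_net
  -- the set of colors used on the cube is countable
  have hccount : (χ '' Icc (0:Fin d → ℝ) 1).Countable := by
    have hsub : χ '' Icc (0:Fin d → ℝ) 1 ⊆
        ⋃ q ∈ D, {c : C | (Icc (0:Fin d → ℝ) 1 ∩ χ ⁻¹' {c} ∩ Metric.ball q ε).Nonempty} := by
      rintro c ⟨x, hx, rfl⟩
      obtain ⟨q, hq, hdq⟩ := hDnet x hx
      exact mem_iUnion₂.mpr ⟨q, hq, ⟨x, ⟨⟨hx, rfl⟩, Metric.mem_ball.mpr hdq⟩⟩⟩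
    refine Set.Countable.mono hsub (Set.Countable.biUnion hDc fun q hq => ?_)
    have := hfin q (hDsub hq)
    have hfin' : {c : C | (Icc (0:Fin d → ℝ) 1 ∩ χ ⁻¹' {c} ∩ Metric.ball q ε).Nonempty}.Finite := by
      rw [← Set.encard_ne_top_iff]
      exact ne_top_of_le_ne_top (by simp) this
    exact hfin'.countable
  have hcne : (χ '' Icc (0:Fin d → ℝ) 1).Nonempty := by
    refine ⟨χ 0, 0, ⟨le_refl _, fun i => by simp⟩, rfl⟩
  obtain ⟨f, hf⟩ := hccount.exists_eq_range hcne
  -- deduplicated color classes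
  set A : ℕ → Set (Fin d → ℝ) := fun i =>
    if ∀ j < i, f j ≠ f i then Icc 0 1 ∩ χ ⁻¹' {f i} else ∅ with hA
  have hsub : ∀ i, A i ⊆ Icc (0:Fin d → ℝ) 1 := by
    intro i x hx
    simp only [hA] at hx
    by_cases hi : ∀ j < i, f j ≠ f i
    · rw [if_pos hi] at hx
      exact hx.1
    · rw [if_neg hi] at hx
      exact absurd hx (notMem_empty x)
  have hcov : Icc (0:Fin d → ℝ) 1 ⊆ ⋃ i, A i := by
    intro x hx
    have hmem : χ x ∈ range f := by
      rw [← hf]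
      exact ⟨x, hx, rfl⟩
    obtain ⟨i, hi⟩ := hmem
    have hP : ∃ i, f i = χ x := ⟨i, hi⟩
    refine mem_iUnion.mpr ⟨Nat.find hP, ?_⟩
    simp only [hA]
    have hfind := Nat.find_spec hP
    have hmin : ∀ j < Nat.find hP, f j ≠ f (Nat.find hP) := by
      intro j hj hcontra
      exact (Nat.find_min hP hj) (hcontra.trans hfind)
    rw [if_pos hmin]
    exact ⟨hx, by simpa using hfind.symm⟩
  have hvalid : ∀ i, ∀ x ∈ A i, ∀ y ∈ A i, dist x y ≠ 1 := by
    intro i x hx y hyy hdist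
    simp only [hA] at hx hyy
    by_cases hi : ∀ j < i, f j ≠ f i
    · rw [if_pos hi] at hx hyy
      have : χ x = χ y := by
        have h1 : χ x = f i := hx.2
        have h2 : χ y = f i := hyy.2
        rw [h1, h2]
      exact hχ x hx.1 y hyy.1 hdist this
    · rw [if_neg hi] at hx
      exact absurd hx (notMem_empty x)
  -- lower bound from the key lemma
  have hlow := key ε hε d A hsub hcov hvalid
  -- upper bound
  have hup : ∑' i, volume (nb ε (A i) ∩ Icc (0:Fin d → ℝ) 1) ≤ ((K - 1 : ℕ) : ℝ≥0∞) := by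
    have hmeas : ∀ i, MeasurableSet (nb ε (A i) ∩ Icc (0:Fin d → ℝ) 1) :=
      fun i => (isOpen_nb _ _).measurableSet.inter measurableSet_Icc
    have h1 : ∑' i, volume (nb ε (A i) ∩ Icc (0:Fin d → ℝ) 1)
        = ∫⁻ p, ∑' i, (nb ε (A i) ∩ Icc 0 1).indicator (fun _ => (1:ℝ≥0∞)) p ∂volume := by
      rw [lintegral_tsum (fun i => (measurable_const.indicator (hmeas i)).aemeasurable)]
      congr 1
      funext i
      rw [lintegral_indicator_const (hmeas i), one_mul]
    have h2 : ∀ p : Fin d → ℝ, ∑' i, (nb ε (A i) ∩ Icc 0 1).indicator (fun _ => (1:ℝ≥0∞)) p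
        ≤ (Icc (0:Fin d → ℝ) 1).indicator (fun _ => ((K-1:ℕ) : ℝ≥0∞)) p := by
      intro p
      by_cases hp : p ∈ Icc (0:Fin d → ℝ) 1
      · rw [Set.indicator_of_mem hp]
        set I : Set ℕ := {i | p ∈ nb ε (A i) ∩ Icc 0 1} with hI
        have hInonzero : ∀ i, i ∈ I → (∀ j < i, f j ≠ f i) := by
          intro i hi
          by_contra hcontra
          have : A i = ∅ := by simp only [hA]; exact if_neg hcontra
          obtain ⟨x, hx, -⟩ := hi.1
          rw [this] at hx
          exact absurd hx (notMem_empty x)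
        have hIinj : Set.InjOn f I := by
          intro i hi j hj hij
          by_contra hne
          rcases Nat.lt_or_ge i j with h | h
          · exact (hInonzero j hj) i h hij
          · exact (hInonzero i hi) j (lt_of_le_of_ne h (Ne.symm hne)) hij.symm
        have hImap : f '' I ⊆
            {c : C | (Icc (0:Fin d → ℝ) 1 ∩ χ ⁻¹' {c} ∩ Metric.ball p ε).Nonempty} := by
          rintro c ⟨i, hi, rfl⟩
          have hAi : A i = Icc 0 1 ∩ χ ⁻¹' {f i} := by
            simp only [hA]
            exact if_pos (hInonzero i hi)
          obtain ⟨⟨x, hxA, hxd⟩, -⟩ := hi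
          rw [hAi] at hxA
          exact ⟨x, ⟨hxA, Metric.mem_ball.mpr hxd⟩⟩
        have hIen : I.encard ≤ ((K-1:ℕ) : ℕ∞) :=
          le_trans (le_trans (hIinj.encard_image).symm.le (Set.encard_le_encard hImap))
            (hfin p hp)
        have hIfin : I.Finite := by
          rw [← Set.encard_ne_top_iff]
          exact ne_top_of_le_ne_top (by simp) hIen
        have hcard : (hIfin.toFinset.card : ℕ∞) ≤ ((K-1:ℕ) : ℕ∞) := by
          rw [← hIfin.encard_eq_coe_toFinset_card]
          exact hIen
        rw [Nat.cast_le] at hcard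
        calc ∑' i, (nb ε (A i) ∩ Icc 0 1).indicator (fun _ => (1:ℝ≥0∞)) p
            = ∑ i ∈ hIfin.toFinset, (nb ε (A i) ∩ Icc 0 1).indicator (fun _ => (1:ℝ≥0∞)) p := by
              refine tsum_eq_sum fun i hi => ?_
              have : i ∉ I := by simpa using hi
              exact Set.indicator_of_notMem (by simpa [hI] using this) _
          _ ≤ ∑ _i ∈ hIfin.toFinset, (1:ℝ≥0∞) := by
              refine Finset.sum_le_sum fun i _ => ?_
              simpa using Set.indicator_le_self' (fun x _ => (zero_le : (0:ℝ≥0∞) ≤ 1)) p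
          _ = (hIfin.toFinset.card : ℝ≥0∞) := by simp
          _ ≤ ((K-1:ℕ) : ℝ≥0∞) := by exact_mod_cast Nat.cast_le.mpr hcard
      · have hz : ∀ i : ℕ, (nb ε (A i) ∩ Icc 0 1).indicator (fun _ => (1:ℝ≥0∞)) p = 0 :=
          fun i => Set.indicator_of_notMem (fun hm => hp hm.2) _
        rw [Set.indicator_of_notMem hp]
        simp [hz]
    calc ∑' i, volume (nb ε (A i) ∩ Icc (0:Fin d → ℝ) 1)
        = ∫⁻ p, ∑' i, (nb ε (A i) ∩ Icc 0 1).indicator (fun _ => (1:ℝ≥0∞)) p ∂volume := h1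
      _ ≤ ∫⁻ p, (Icc (0:Fin d → ℝ) 1).indicator (fun _ => ((K-1:ℕ) : ℝ≥0∞)) p ∂volume :=
          lintegral_mono h2
      _ = ((K-1:ℕ) : ℝ≥0∞) * volume (Icc (0:Fin d → ℝ) 1) :=
          lintegral_indicator_const measurableSet_Icc _
      _ = ((K-1:ℕ) : ℝ≥0∞) := by
          rw [Real.volume_Icc_pi]
          simp
  -- contradiction
  have hcontr : ENNReal.ofReal (((1+2*ε)/(1+ε))^d) ≤ ((K-1:ℕ) : ℝ≥0∞) := le_trans hlow hup
  have hlt : ((K-1:ℕ) : ℝ) < ((1+2*ε)/(1+ε))^d := by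
    have h2 : (K:ℝ) < y + 1 := Nat.ceil_lt_add_one hy0.le
    have h3 : ((K-1:ℕ):ℝ) = (K:ℝ) - 1 := by
      rw [Nat.cast_sub hK1]
      norm_num
    rw [h3, ← hyeq]
    linarith
  have : ((K-1:ℕ) : ℝ≥0∞) < ENNReal.ofReal (((1+2*ε)/(1+ε))^d) := by
    rw [← ENNReal.ofReal_natCast]
    exact (ENNReal.ofReal_lt_ofReal_iff (by positivity)).mpr hlt
  exact absurd hcontr (not_le.mpr this)
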